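/- Let H be a complex Hilbert space containing two linearly independent vectors (i.e. of dimension at least 2), and let L(H) be the lattice of closed subspaces of H. Let S be a presheaf of nonempty sets on L(H), i.e. to each U ∈ L(H) is assigned a nonempty set S(U) and to each pair U ⊆ V a restriction map ρ_U^V : S(V) → S(U) with ρ_U^U = id and ρ_U^V ∘ ρ_V^W = ρ_U^W for U ⊆ V ⊆ W. Assume S is complete: whenever U is the supremum (closure of the span of the union) of a family (U_i)_{i∈I} in L(H) and elements f_i ∈ S(U_i) satisfy ρ_{U_i∩U_j}^{U_i}(f_i) = ρ_{U_i∩U_j}^{U_j}(f_j) whenever U_i ∩ U_j ≠ 0, then there is exactly one f ∈ S(U) with ρ_{U_i}^{U}(f) = f_i for all i. Then S(U) is a singleton for every U ∈ L(H). -/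

import Mathlib

open scoped ComplexInnerProductSpace

/-- The lattice `L(H)` of closed (linear) subspaces of a Hilbert space `H`. -/
def ClosedSubspace (H : Type*) [NormedAddCommGroup H] [InnerProductSpace ℂ H] : Type _ :=
  {U : Submodule ℂ H // IsClosed (U : Set H)}

/-- The meet (intersection) of two closed subspaces. -/
def ClosedSubspace.inf {H : Type*} [NormedAddCommGroup H] [InnerProductSpace ℂ H]
    (U V : ClosedSubspace H) : ClosedSubspace H :=
  ⟨U.1 ⊓ V.1, by rw [Submodule.coe_inf]; exact U.2.inter V.2⟩

/-- Auxiliary: split a type into two equinumerous halves plus at most one point. -/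
private lemma half_split (α : Type v) : ∃ (β : Type v) (f : β ⊕ β → α),
    Function.Injective f ∧ (Set.range f)ᶜ.Subsingleton := by
  classical
  by_cases hfin : Finite α
  · obtain ⟨n, ⟨e⟩⟩ := Finite.exists_equiv_fin α
    refine ⟨ULift (Fin (n / 2)), fun i => e.symm (Sum.elim
      (fun a : ULift (Fin (n / 2)) => (⟨a.down.1, by have := a.down.2; omega⟩ : Fin n))
      (fun a : ULift (Fin (n / 2)) => (⟨n / 2 + a.down.1, by have := a.down.2; omega⟩ : Fin n))
      i), ?_, ?_⟩
    · intro i j hij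
      have h2 := e.symm.injective hij
      rcases i with i | i <;> rcases j with j | j <;>
        simp only [Sum.elim_inl, Sum.elim_inr, Fin.mk.injEq] at h2
      · rw [ULift.down_injective (Fin.ext h2)]
      · exact absurd h2 (by have := i.down.2; omega)
      · exact absurd h2 (by have := j.down.2; omega)
      · have hval : (i.down : ℕ) = j.down := by omega
        rw [ULift.down_injective (Fin.ext hval)]
    · intro p hp q hq
      have key : ∀ z : α, z ∈ (Set.range (fun i => e.symm (Sum.elim
          (fun a : ULift (Fin (n / 2)) => (⟨a.down.1, by have := a.down.2; omega⟩ : Fin n))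
          (fun a : ULift (Fin (n / 2)) => (⟨n / 2 + a.down.1, by have := a.down.2; omega⟩ : Fin n))
          i)))ᶜ → n / 2 + n / 2 ≤ (e z).1 := by
        intro z hz
        by_contra hlt
        push_neg at hlt
        apply hz
        by_cases h1 : (e z).1 < n / 2
        · refine ⟨Sum.inl ⟨⟨(e z).1, h1⟩⟩, ?_⟩
          simp only [Sum.elim_inl]
          rw [Equiv.symm_apply_eq]
        · refine ⟨Sum.inr ⟨⟨(e z).1 - n / 2, by omega⟩⟩, ?_⟩
          simp only [Sum.elim_inr]
          rw [Equiv.symm_apply_eq]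
          exact Fin.ext (show n / 2 + ((e z).1 - n / 2) = (e z).1 by omega)
      have h1 := key p hp
      have h2 := key q hq
      have h3 : e p = e q := Fin.ext (by have := (e p).2; have := (e q).2; omega)
      have h4 := congrArg e.symm h3
      rwa [Equiv.symm_apply_apply, Equiv.symm_apply_apply] at h4
  · rw [not_finite_iff_infinite] at hfin
    have hcard : Cardinal.mk (α ⊕ α) = Cardinal.mk α := by
      rw [Cardinal.mk_sum, Cardinal.lift_id]
      exact Cardinal.add_eq_self (Cardinal.aleph0_le_mk α)
    obtain ⟨e⟩ := Cardinal.eq.1 hcard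
    refine ⟨α, e, e.injective, ?_⟩
    rw [e.surjective.range_eq, Set.compl_univ]
    exact Set.subsingleton_empty

private lemma clsup {H : Type*} [NormedAddCommGroup H] [InnerProductSpace ℂ H]
    (p q : Submodule ℂ H) :
    (p.topologicalClosure ⊔ q.topologicalClosure).topologicalClosure
      = (p ⊔ q).topologicalClosure := by
  apply le_antisymm
  · apply Submodule.topologicalClosure_minimal
    · exact sup_le (Submodule.topologicalClosure_mono le_sup_left)
        (Submodule.topologicalClosure_mono le_sup_right)
    · exact Submodule.isClosed_topologicalClosure _
  · apply Submodule.topologicalClosure_mono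
    exact sup_le (le_trans (Submodule.le_topologicalClosure _) le_sup_left)
      (le_trans (Submodule.le_topologicalClosure _) le_sup_right)

private lemma clsup1 {H : Type*} [NormedAddCommGroup H] [InnerProductSpace ℂ H]
    (p q : Submodule ℂ H) :
    (p.topologicalClosure ⊔ q).topologicalClosure = (p ⊔ q).topologicalClosure := by
  apply le_antisymm
  · apply Submodule.topologicalClosure_minimal
    · exact sup_le (Submodule.topologicalClosure_mono le_sup_left)
        (le_trans (Submodule.le_topologicalClosure _)
          (Submodule.topologicalClosure_mono le_sup_right))
    · exact Submodule.isClosed_topologicalClosure _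
  · apply Submodule.topologicalClosure_mono
    exact sup_le (le_trans (Submodule.le_topologicalClosure _) le_sup_left) le_sup_right

private def fam2 {H : Type*} [NormedAddCommGroup H] [InnerProductSpace ℂ H]
    (A B : ClosedSubspace H) : ULift Bool → ClosedSubspace H :=
  fun i => match i with
  | ⟨false⟩ => A
  | ⟨true⟩ => B

private def fam3 {H : Type*} [NormedAddCommGroup H] [InnerProductSpace ℂ H]
    (A B C : ClosedSubspace H) : Option (ULift Bool) → ClosedSubspace H :=
  fun i => match i with
  | some ⟨false⟩ => A
  | some ⟨true⟩ => B
  | none => C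

private def fam2sec {H : Type*} [NormedAddCommGroup H] [InnerProductSpace ℂ H]
    (S : ClosedSubspace H → Type w) {A B : ClosedSubspace H}
    (a : S A) (b : S B) : ∀ i, S (fam2 A B i) :=
  fun i => match i with
  | ⟨false⟩ => a
  | ⟨true⟩ => b

private def fam3sec {H : Type*} [NormedAddCommGroup H] [InnerProductSpace ℂ H]
    (S : ClosedSubspace H → Type w) {A B C : ClosedSubspace H}
    (a : S A) (b : S B) (c : S C) : ∀ i, S (fam3 A B C i) :=
  fun i => match i with
  | some ⟨false⟩ => a
  | some ⟨true⟩ => b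
  | none => c

/-- Any complete presheaf of nonempty sets on the lattice `L(H)` of closed
subspaces of a Hilbert space of dimension at least 2 is trivial: all its sets
are singletons.  Here `ρ` are the restriction maps of the presheaf (satisfying
the identity and composition laws), and completeness says: whenever `Usup` is
the supremum (closure of the span of the union) of a family `Ufam` and the
local data `f i ∈ S (Ufam i)` agree on all nonzero intersections, there is a
unique `g ∈ S Usup` restricting to all the `f i`. -/
theorem stmt0 {H : Type*} [NormedAddCommGroup H] [InnerProductSpace ℂ H]
    [CompleteSpace H]
    (hdim : ∃ x y : H, LinearIndependent ℂ ![x, y])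
    (S : ClosedSubspace H → Type*)
    (hne : ∀ U : ClosedSubspace H, Nonempty (S U))
    (ρ : ∀ U V : ClosedSubspace H, U.1 ≤ V.1 → S V → S U)
    (hid : ∀ (U : ClosedSubspace H) (h : U.1 ≤ U.1) (s : S U), ρ U U h s = s)
    (hcomp : ∀ (U V W : ClosedSubspace H) (hUV : U.1 ≤ V.1) (hVW : V.1 ≤ W.1)
      (s : S W), ρ U V hUV (ρ V W hVW s) = ρ U W (le_trans hUV hVW) s)
    (hsheaf : ∀ (I : Type*) (Ufam : I → ClosedSubspace H)
      (Usup : ClosedSubspace H),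
      Usup.1 = (⨆ i, (Ufam i).1).topologicalClosure →
      ∀ hle : ∀ i, (Ufam i).1 ≤ Usup.1,
      ∀ f : ∀ i, S (Ufam i),
      (∀ i j, (Ufam i).1 ⊓ (Ufam j).1 ≠ ⊥ →
        ρ ((Ufam i).inf (Ufam j)) (Ufam i) inf_le_left (f i) =
        ρ ((Ufam i).inf (Ufam j)) (Ufam j) inf_le_right (f j)) →
      ∃! g : S Usup, ∀ i, ρ (Ufam i) Usup (hle i) g = f i) :
    ∀ U : ClosedSubspace H, ∃ s : S U, ∀ t : S U, t = s := by
  classical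
  obtain ⟨x, y, hxy⟩ := hdim
  -- spans of finite sets are closed
  have hclosed : ∀ A : Set H, A.Finite →
      IsClosed ((Submodule.span ℂ A : Submodule ℂ H) : Set H) := by
    intro A hA
    haveI := FiniteDimensional.span_of_finite ℂ hA
    exact Submodule.closed_of_finiteDimensional _
  -- intersections of "independent" lines are trivial
  have hinf : ∀ a b : H, (∀ s t : ℂ, s • a + t • b = 0 → s = 0 ∧ t = 0) →
      Submodule.span ℂ {a} ⊓ Submodule.span ℂ {b} = ⊥ := by
    intro a b hab
    rw [eq_bot_iff]
    intro z hz
    obtain ⟨hz1, hz2⟩ := Submodule.mem_inf.1 hz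
    obtain ⟨c, rfl⟩ := Submodule.mem_span_singleton.1 hz1
    obtain ⟨d, hd⟩ := Submodule.mem_span_singleton.1 hz2
    have h0 : c • a + (-d) • b = 0 := by rw [neg_smul, hd]; abel
    rw [Submodule.mem_bot, (hab c (-d) h0).1, zero_smul]
  -- every nonzero vector embeds in an independent pair
  have hexw : ∀ v : H, v ≠ 0 → ∃ w : H, ∀ a b : ℂ, a • v + b • w = 0 → a = 0 ∧ b = 0 := by
    intro v hv
    have gen : ∀ u : H, u ∉ Submodule.span ℂ {v} →
        ∀ a b : ℂ, a • v + b • u = 0 → a = 0 ∧ b = 0 := by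
      intro u hu a b hab
      by_cases hb : b = 0
      · subst hb
        rw [zero_smul, add_zero, smul_eq_zero] at hab
        exact ⟨hab.resolve_right hv, rfl⟩
      · exfalso
        apply hu
        rw [Submodule.mem_span_singleton]
        refine ⟨-(b⁻¹ * a), ?_⟩
        have h1 : b • u = -(a • v) := eq_neg_of_add_eq_zero_right hab
        have h2 : u = b⁻¹ • (-(a • v)) := by
          rw [← h1, smul_smul, inv_mul_cancel₀ hb, one_smul]
        rw [h2, neg_smul, smul_neg, smul_smul]
    by_cases hx : x ∈ Submodule.span ℂ {v}
    · by_cases hy : y ∈ Submodule.span ℂ {v}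
      · exfalso
        obtain ⟨a, ha⟩ := Submodule.mem_span_singleton.1 hx
        obtain ⟨b, hb⟩ := Submodule.mem_span_singleton.1 hy
        have hx0 : x ≠ 0 := hxy.ne_zero 0
        have ha0 : a ≠ 0 := by rintro rfl; rw [zero_smul] at ha; exact hx0 ha.symm
        have h0 : b • x + (-a) • y = 0 := by
          rw [← ha, ← hb, neg_smul, smul_smul, smul_smul, mul_comm]; abel
        have := (LinearIndependent.pair_iff.1 hxy b (-a) h0).2
        rw [neg_eq_zero] at this
        exact ha0 this
      · exact ⟨y, gen y hy⟩
    · exact ⟨x, gen x hx⟩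
  -- the TRIPLE lemma: three pairwise-disjoint subspaces, any two of which
  -- have dense span in P, force S C to be a singleton.
  have triple : ∀ A B C P : ClosedSubspace H,
      P.1 = (A.1 ⊔ B.1).topologicalClosure → C.1 ≤ P.1 →
      A.1 ⊓ B.1 = ⊥ → A.1 ⊓ C.1 = ⊥ → B.1 ⊓ C.1 = ⊥ →
      ∀ s t : S C, s = t := by
    intro A B C P hP hCP hAB hAC hBC s t
    have hAP : A.1 ≤ P.1 := by
      rw [hP]; exact le_trans le_sup_left (Submodule.le_topologicalClosure _)
    have hBP : B.1 ≤ P.1 := by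
      rw [hP]; exact le_trans le_sup_right (Submodule.le_topologicalClosure _)
    have hsup2 : P.1 = (⨆ i, (fam2 A B i).1).topologicalClosure := by
      have h1 : (⨆ i, (fam2 A B i).1) = A.1 ⊔ B.1 := by
        apply le_antisymm
        · apply iSup_le
          rintro ⟨(_|_)⟩
          · exact le_sup_left
          · exact le_sup_right
        · exact sup_le (le_iSup (fun i => (fam2 A B i).1) ⟨false⟩)
            (le_iSup (fun i => (fam2 A B i).1) ⟨true⟩)
      rw [h1]; exact hP
    have hsup3 : P.1 = (⨆ i, (fam3 A B C i).1).topologicalClosure := by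
      have h1 : (⨆ i, (fam3 A B C i).1) = (A.1 ⊔ B.1) ⊔ C.1 := by
        apply le_antisymm
        · apply iSup_le
          rintro (_ | ⟨(_|_)⟩)
          · exact le_sup_right
          · exact le_trans le_sup_left le_sup_left
          · exact le_trans le_sup_right le_sup_left
        · refine sup_le (sup_le ?_ ?_) ?_
          · exact le_iSup (fun i => (fam3 A B C i).1) (some ⟨false⟩)
          · exact le_iSup (fun i => (fam3 A B C i).1) (some ⟨true⟩)
          · exact le_iSup (fun i => (fam3 A B C i).1) none
      rw [h1]
      apply le_antisymm
      · rw [hP]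
        apply Submodule.topologicalClosure_mono
        exact le_sup_left
      · exact Submodule.topologicalClosure_minimal _ (sup_le (sup_le hAP hBP) hCP) P.2
    have hle2 : ∀ i, (fam2 A B i).1 ≤ P.1 := by
      rintro ⟨(_|_)⟩
      · exact hAP
      · exact hBP
    have hle3 : ∀ i, (fam3 A B C i).1 ≤ P.1 := by
      rintro (_ | ⟨(_|_)⟩)
      · exact hCP
      · exact hAP
      · exact hBP
    obtain ⟨a⟩ := hne A
    obtain ⟨b⟩ := hne B
    have compat2 : ∀ i j, (fam2 A B i).1 ⊓ (fam2 A B j).1 ≠ ⊥ →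
        ρ ((fam2 A B i).inf (fam2 A B j)) (fam2 A B i) inf_le_left (fam2sec S a b i) =
        ρ ((fam2 A B i).inf (fam2 A B j)) (fam2 A B j) inf_le_right (fam2sec S a b j) := by
      rintro ⟨(_|_)⟩ ⟨(_|_)⟩ hij
      · rfl
      · exact absurd hAB hij
      · exact absurd (by rw [inf_comm]; exact hAB) hij
      · rfl
    obtain ⟨g2, hg2, hg2u⟩ := hsheaf (ULift Bool) (fam2 A B) P hsup2 hle2
      (fam2sec S a b) compat2
    have glue3 : ∀ c : S C, ∃ g3 : S P,
        ∀ i, ρ (fam3 A B C i) P (hle3 i) g3 = fam3sec S a b c i := by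
      intro c
      have compat3 : ∀ i j, (fam3 A B C i).1 ⊓ (fam3 A B C j).1 ≠ ⊥ →
          ρ ((fam3 A B C i).inf (fam3 A B C j)) (fam3 A B C i) inf_le_left
            (fam3sec S a b c i) =
          ρ ((fam3 A B C i).inf (fam3 A B C j)) (fam3 A B C j) inf_le_right
            (fam3sec S a b c j) := by
        rintro (_ | ⟨(_|_)⟩) (_ | ⟨(_|_)⟩) hij
        · rfl
        · exact absurd (by rw [inf_comm]; exact hAC) hij
        · exact absurd (by rw [inf_comm]; exact hBC) hij
        · exact absurd hAC hij
        · rfl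
        · exact absurd hAB hij
        · exact absurd hBC hij
        · exact absurd (by rw [inf_comm]; exact hAB) hij
        · rfl
      obtain ⟨g3, hg3, -⟩ := hsheaf (Option (ULift Bool)) (fam3 A B C) P hsup3 hle3
        (fam3sec S a b c) compat3
      exact ⟨g3, hg3⟩
    obtain ⟨gs, hgs⟩ := glue3 s
    obtain ⟨gt, hgt⟩ := glue3 t
    have hs2 : gs = g2 := by
      apply hg2u
      rintro ⟨(_|_)⟩
      · exact hgs (some ⟨false⟩)
      · exact hgs (some ⟨true⟩)
    have ht2 : gt = g2 := by
      apply hg2u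
      rintro ⟨(_|_)⟩
      · exact hgt (some ⟨false⟩)
      · exact hgt (some ⟨true⟩)
    have h1 : ρ C P hCP gs = s := hgs none
    have h2 : ρ C P hCP gt = t := hgt none
    rw [← h1, ← h2, hs2, ht2]
  -- the EXTEND lemma: a disjoint 2-cover by singleton pieces makes the total
  -- a singleton.
  have extend : ∀ A B U' : ClosedSubspace H, A.1 ⊓ B.1 = ⊥ →
      U'.1 = (A.1 ⊔ B.1).topologicalClosure →
      (∀ s t : S A, s = t) → (∀ s t : S B, s = t) →
      ∀ s t : S U', s = t := by
    intro A B U' hAB hsup hSA hSB s t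
    have hAU : A.1 ≤ U'.1 := by
      rw [hsup]; exact le_trans le_sup_left (Submodule.le_topologicalClosure _)
    have hBU : B.1 ≤ U'.1 := by
      rw [hsup]; exact le_trans le_sup_right (Submodule.le_topologicalClosure _)
    have singA' : ∀ W : ClosedSubspace H, W = A → ∀ s' t' : S W, s' = t' := by
      rintro W rfl; exact hSA
    have singB' : ∀ W : ClosedSubspace H, W = B → ∀ s' t' : S W, s' = t' := by
      rintro W rfl; exact hSB
    have eAU : A.inf U' = A := Subtype.ext (inf_eq_left.2 hAU)
    have eUA : U'.inf A = A := Subtype.ext (inf_eq_right.2 hAU)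
    have eBU : B.inf U' = B := Subtype.ext (inf_eq_left.2 hBU)
    have eUB : U'.inf B = B := Subtype.ext (inf_eq_right.2 hBU)
    obtain ⟨a⟩ := hne A
    obtain ⟨b⟩ := hne B
    have hsup2 : U'.1 = (⨆ i, (fam2 A B i).1).topologicalClosure := by
      have h1 : (⨆ i, (fam2 A B i).1) = A.1 ⊔ B.1 := by
        apply le_antisymm
        · apply iSup_le
          rintro ⟨(_|_)⟩
          · exact le_sup_left
          · exact le_sup_right
        · exact sup_le (le_iSup (fun i => (fam2 A B i).1) ⟨false⟩)
            (le_iSup (fun i => (fam2 A B i).1) ⟨true⟩)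
      rw [h1]; exact hsup
    have hle2 : ∀ i, (fam2 A B i).1 ≤ U'.1 := by
      rintro ⟨(_|_)⟩
      · exact hAU
      · exact hBU
    have compat2 : ∀ i j, (fam2 A B i).1 ⊓ (fam2 A B j).1 ≠ ⊥ →
        ρ ((fam2 A B i).inf (fam2 A B j)) (fam2 A B i) inf_le_left (fam2sec S a b i) =
        ρ ((fam2 A B i).inf (fam2 A B j)) (fam2 A B j) inf_le_right (fam2sec S a b j) := by
      rintro ⟨(_|_)⟩ ⟨(_|_)⟩ hij
      · rfl
      · exact absurd hAB hij
      · exact absurd (by rw [inf_comm]; exact hAB) hij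
      · rfl
    obtain ⟨g2, hg2, hg2u⟩ := hsheaf (ULift Bool) (fam2 A B) U' hsup2 hle2
      (fam2sec S a b) compat2
    have hsup3 : U'.1 = (⨆ i, (fam3 A B U' i).1).topologicalClosure := by
      have h1 : (⨆ i, (fam3 A B U' i).1) = (A.1 ⊔ B.1) ⊔ U'.1 := by
        apply le_antisymm
        · apply iSup_le
          rintro (_ | ⟨(_|_)⟩)
          · exact le_sup_right
          · exact le_trans le_sup_left le_sup_left
          · exact le_trans le_sup_right le_sup_left
        · refine sup_le (sup_le ?_ ?_) ?_
          · exact le_iSup (fun i => (fam3 A B U' i).1) (some ⟨false⟩)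
          · exact le_iSup (fun i => (fam3 A B U' i).1) (some ⟨true⟩)
          · exact le_iSup (fun i => (fam3 A B U' i).1) none
      rw [h1, sup_eq_right.2 (sup_le hAU hBU), U'.2.submodule_topologicalClosure_eq]
    have hle3 : ∀ i, (fam3 A B U' i).1 ≤ U'.1 := by
      rintro (_ | ⟨(_|_)⟩)
      · exact le_refl _
      · exact hAU
      · exact hBU
    suffices hkey : ∀ c : S U', c = g2 by rw [hkey s, hkey t]
    intro c
    have compat3 : ∀ i j, (fam3 A B U' i).1 ⊓ (fam3 A B U' j).1 ≠ ⊥ →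
        ρ ((fam3 A B U' i).inf (fam3 A B U' j)) (fam3 A B U' i) inf_le_left
          (fam3sec S a b c i) =
        ρ ((fam3 A B U' i).inf (fam3 A B U' j)) (fam3 A B U' j) inf_le_right
          (fam3sec S a b c j) := by
      rintro (_ | ⟨(_|_)⟩) (_ | ⟨(_|_)⟩) hij
      · rfl
      · exact singA' _ eUA _ _
      · exact singB' _ eUB _ _
      · exact singA' _ eAU _ _
      · rfl
      · exact absurd hAB hij
      · exact singB' _ eBU _ _
      · exact absurd (by rw [inf_comm]; exact hAB) hij
      · rfl
    obtain ⟨g3, hg3, -⟩ := hsheaf (Option (ULift Bool)) (fam3 A B U') U' hsup3 hle3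
      (fam3sec S a b c) compat3
    have hcg : g3 = c := by
      have h : ρ U' U' (hle3 none) g3 = c := hg3 none
      exact (hid U' (hle3 none) g3).symm.trans h
    have hg32 : g3 = g2 := by
      apply hg2u
      rintro ⟨(_|_)⟩
      · exact hg3 (some ⟨false⟩)
      · exact hg3 (some ⟨true⟩)
    rw [← hcg, hg32]
  -- singletons over lines, via a plane and three pairwise-disjoint lines
  have singline : ∀ v : H, v ≠ 0 → ∀ W : ClosedSubspace H,
      W.1 = Submodule.span ℂ {v} → ∀ s t : S W, s = t := by
    intro v hv W hW
    obtain ⟨w', hvw⟩ := hexw v hv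
    have hABspan : Submodule.span ℂ {w'} ⊔ Submodule.span ℂ {v + w'}
        = Submodule.span ℂ {v, w'} := by
      apply le_antisymm
      · apply sup_le
        · rw [Submodule.span_singleton_le_iff_mem]
          exact Submodule.subset_span (Set.mem_insert_of_mem _ rfl)
        · rw [Submodule.span_singleton_le_iff_mem]
          exact Submodule.add_mem _ (Submodule.subset_span (Set.mem_insert _ _))
            (Submodule.subset_span (Set.mem_insert_of_mem _ rfl))
      · rw [Submodule.span_le]
        rintro z (rfl | rfl)
        · have h1 : z + w' ∈ Submodule.span ℂ {w'} ⊔ Submodule.span ℂ {z + w'} :=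
            Submodule.mem_sup_right (Submodule.mem_span_singleton_self _)
          have h2 : w' ∈ Submodule.span ℂ {w'} ⊔ Submodule.span ℂ {z + w'} :=
            Submodule.mem_sup_left (Submodule.mem_span_singleton_self _)
          have h3 := Submodule.sub_mem _ h1 h2
          rwa [add_sub_cancel_right] at h3
        · exact Submodule.mem_sup_left (Submodule.mem_span_singleton_self _)
    apply triple ⟨Submodule.span ℂ {w'}, hclosed _ (Set.finite_singleton _)⟩
      ⟨Submodule.span ℂ {v + w'}, hclosed _ (Set.finite_singleton _)⟩
      W ⟨Submodule.span ℂ {v, w'}, hclosed _ ((Set.finite_singleton w').insert v)⟩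
    · show Submodule.span ℂ {v, w'}
        = (Submodule.span ℂ {w'} ⊔ Submodule.span ℂ {v + w'}).topologicalClosure
      rw [hABspan, (hclosed _ ((Set.finite_singleton w').insert v)).submodule_topologicalClosure_eq]
    · show W.1 ≤ Submodule.span ℂ {v, w'}
      rw [hW, Submodule.span_singleton_le_iff_mem]
      exact Submodule.subset_span (Set.mem_insert _ _)
    · show Submodule.span ℂ {w'} ⊓ Submodule.span ℂ {v + w'} = ⊥
      apply hinf
      intro s t hst
      have h0 : t • v + (s + t) • w' = 0 := by
        rw [← hst, smul_add, add_smul]; abel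
      obtain ⟨ht, hst'⟩ := hvw t (s + t) h0
      refine ⟨?_, ht⟩
      rw [ht, add_zero] at hst'; exact hst'
    · show Submodule.span ℂ {w'} ⊓ W.1 = ⊥
      rw [hW]
      apply hinf
      intro s t hst
      have h0 : t • v + s • w' = 0 := by rw [add_comm]; exact hst
      obtain ⟨ht, hs⟩ := hvw t s h0
      exact ⟨hs, ht⟩
    · show Submodule.span ℂ {v + w'} ⊓ W.1 = ⊥
      rw [hW]
      apply hinf
      intro s t hst
      have h0 : (s + t) • v + s • w' = 0 := by
        rw [← hst, smul_add, add_smul]; abel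
      obtain ⟨hst', hs⟩ := hvw (s + t) s h0
      refine ⟨hs, ?_⟩
      rw [hs, zero_add] at hst'; exact hst'
  -- orthogonality helpers
  have clo_orth : ∀ (sσ : Set H) (c : H), (∀ z ∈ sσ, ⟪c, z⟫ = 0) →
      ∀ x' ∈ (Submodule.span ℂ sσ).topologicalClosure, ⟪c, x'⟫ = 0 := by
    intro sσ c hc x' hx'
    have hker : (Submodule.span ℂ sσ).topologicalClosure
        ≤ LinearMap.ker (innerSL ℂ c : H →ₗ[ℂ] ℂ) := by
      apply Submodule.topologicalClosure_minimal
      · rw [Submodule.span_le]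
        intro z hz
        rw [SetLike.mem_coe, LinearMap.mem_ker]
        exact hc z hz
      · exact ContinuousLinearMap.isClosed_ker _
    have h := hker hx'
    rwa [LinearMap.mem_ker] at h
  have selforth : ∀ (sσ : Set H) (x' : H),
      x' ∈ (Submodule.span ℂ sσ).topologicalClosure →
      (∀ z ∈ sσ, ⟪x', z⟫ = 0) → x' = 0 := by
    intro sσ x' hx' hz
    exact inner_self_eq_zero.1 (clo_orth sσ x' hz x' hx')
  -- the main argument
  intro U
  haveI : CompleteSpace ↥U.1 := U.2.completeSpace_coe
  obtain ⟨w, b, hb⟩ := exists_hilbertBasis ℂ ↥U.1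
  set g : ↥w → H := fun a => ((a : ↥U.1) : H) with hgdef
  have hg : Orthonormal ℂ g := by
    have hon := b.orthonormal
    rw [hb] at hon
    rw [orthonormal_iff_ite] at hon ⊢
    intro i j
    have h := hon i j
    rw [Submodule.coe_inner] at h
    exact h
  have D : (Submodule.span ℂ (Set.range g)).topologicalClosure = U.1 := by
    apply le_antisymm
    · refine Submodule.topologicalClosure_minimal _ ?_ U.2
      rw [Submodule.span_le]
      rintro _ ⟨a, rfl⟩
      exact ((a : ↥U.1)).2
    · intro z hz
      have hz' : (⟨z, hz⟩ : ↥U.1) ∈ (Submodule.span ℂ (Set.range ⇑b)).topologicalClosure := by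
        rw [b.dense_span]; trivial
      have himg : z ∈ closure (((↑) : ↥U.1 → H) ''
          ((Submodule.span ℂ (Set.range ⇑b) : Submodule ℂ ↥U.1) : Set ↥U.1)) := by
        apply image_closure_subset_closure_image continuous_subtype_val
        exact ⟨_, hz', rfl⟩
      have hsub : (((↑) : ↥U.1 → H) ''
          ((Submodule.span ℂ (Set.range ⇑b) : Submodule ℂ ↥U.1) : Set ↥U.1))
          ⊆ ((Submodule.span ℂ (Set.range g) : Submodule ℂ H) : Set H) := by
        rintro _ ⟨p, hp, rfl⟩
        have h1 : U.1.subtype p ∈ Submodule.map U.1.subtype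
            (Submodule.span ℂ (Set.range ⇑b)) := Submodule.mem_map_of_mem hp
        rw [Submodule.map_span] at h1
        have h2 : ⇑U.1.subtype '' Set.range ⇑b = Set.range g := by
          rw [hb, ← Set.range_comp]
          rfl
        rw [h2] at h1
        exact h1
      exact closure_mono hsub himg
  obtain ⟨β, cf, hcfinj, hcsub⟩ := half_split ↥w
  set uu : β → H := fun i => g (cf (Sum.inl i)) with huudef
  set vv : β → H := fun i => g (cf (Sum.inr i)) with hvvdef
  have horth : ∀ p q : ↥w, p ≠ q → ⟪g p, g q⟫ = 0 := by
    intro p q hpq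
    have h := orthonormal_iff_ite.1 hg p q
    rwa [if_neg hpq] at h
  have hnorm1 : ∀ p : ↥w, ⟪g p, g p⟫ = 1 := by
    intro p
    have h := orthonormal_iff_ite.1 hg p p
    rwa [if_pos rfl] at h
  have huv : ∀ i j, ⟪uu i, vv j⟫ = 0 :=
    fun i j => horth _ _ (fun h => Sum.inl_ne_inr (hcfinj h))
  have hvu : ∀ i j, ⟪vv i, uu j⟫ = 0 :=
    fun i j => horth _ _ (fun h => Sum.inr_ne_inl (hcfinj h))
  have honu : Orthonormal ℂ uu :=
    hg.comp (fun i => cf (Sum.inl i)) (fun i j h => Sum.inl_injective (hcfinj h))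
  have honv : Orthonormal ℂ vv :=
    hg.comp (fun i => cf (Sum.inr i)) (fun i j h => Sum.inr_injective (hcfinj h))
  set su : Set H := Set.range uu with hsudef
  set sv : Set H := Set.range vv with hsvdef
  set sw : Set H := Set.range (fun i : β => uu i + vv i) with hswdef
  set M1 : Submodule ℂ H := (Submodule.span ℂ su).topologicalClosure with hM1def
  set M2 : Submodule ℂ H := (Submodule.span ℂ sv).topologicalClosure with hM2def
  set MB : Submodule ℂ H := (Submodule.span ℂ sw).topologicalClosure with hMBdef
  have hM1c : IsClosed (M1 : Set H) := Submodule.isClosed_topologicalClosure _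
  have hM2c : IsClosed (M2 : Set H) := Submodule.isClosed_topologicalClosure _
  have hMBc : IsClosed (MB : Set H) := Submodule.isClosed_topologicalClosure _
  -- pairwise disjointness
  have hK12 : M1 ⊓ M2 = ⊥ := by
    rw [eq_bot_iff]
    rintro z hz
    obtain ⟨hz1, hz2⟩ := Submodule.mem_inf.1 hz
    rw [Submodule.mem_bot]
    apply selforth su z hz1
    rintro _ ⟨j, rfl⟩
    rw [inner_eq_zero_symm]
    exact clo_orth sv (uu j) (by rintro _ ⟨i, rfl⟩; exact huv j i) z hz2
  have hwgen : ∀ j, ∀ z ∈ sw, ⟪uu j - vv j, z⟫ = 0 := by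
    intro j _ hz
    obtain ⟨i, rfl⟩ := hz
    rw [inner_sub_left, inner_add_right, inner_add_right, huv j i, hvu j i,
      orthonormal_iff_ite.1 honu j i, orthonormal_iff_ite.1 honv j i]
    ring
  have hK1B : M1 ⊓ MB = ⊥ := by
    rw [eq_bot_iff]
    rintro z hz
    obtain ⟨hz1, hzB⟩ := Submodule.mem_inf.1 hz
    rw [Submodule.mem_bot]
    have hvz : ∀ j, ⟪vv j, z⟫ = 0 := fun j =>
      clo_orth su (vv j) (by rintro _ ⟨i, rfl⟩; exact hvu j i) z hz1
    have huz : ∀ j, ⟪uu j, z⟫ = 0 := by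
      intro j
      have h := clo_orth sw (uu j - vv j) (hwgen j) z hzB
      rw [inner_sub_left, hvz j, sub_zero] at h
      exact h
    apply selforth su z hz1
    rintro _ ⟨j, rfl⟩
    rw [inner_eq_zero_symm]
    exact huz j
  have hK2B : M2 ⊓ MB = ⊥ := by
    rw [eq_bot_iff]
    rintro z hz
    obtain ⟨hz2, hzB⟩ := Submodule.mem_inf.1 hz
    rw [Submodule.mem_bot]
    have huz : ∀ j, ⟪uu j, z⟫ = 0 := fun j =>
      clo_orth sv (uu j) (by rintro _ ⟨i, rfl⟩; exact huv j i) z hz2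
    have hvz : ∀ j, ⟪vv j, z⟫ = 0 := by
      intro j
      have h := clo_orth sw (uu j - vv j) (hwgen j) z hzB
      rw [inner_sub_left, huz j, zero_sub, neg_eq_zero] at h
      exact h
    apply selforth sv z hz2
    rintro _ ⟨j, rfl⟩
    rw [inner_eq_zero_symm]
    exact hvz j
  -- singletons over the halves
  have singK1 : ∀ s t : S ⟨M1, hM1c⟩, s = t := by
    apply triple ⟨M2, hM2c⟩ ⟨MB, hMBc⟩ ⟨M1, hM1c⟩
      ⟨(M2 ⊔ MB).topologicalClosure, Submodule.isClosed_topologicalClosure _⟩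
      rfl ?_ hK2B (by rw [inf_comm]; exact hK12) (by rw [inf_comm]; exact hK1B)
    show M1 ≤ (M2 ⊔ MB).topologicalClosure
    rw [hM1def]
    refine Submodule.topologicalClosure_minimal _ ?_ (Submodule.isClosed_topologicalClosure _)
    rw [Submodule.span_le]
    rintro _ ⟨i, rfl⟩
    have h1 : uu i + vv i ∈ MB :=
      Submodule.le_topologicalClosure _ (Submodule.subset_span ⟨i, rfl⟩)
    have h2 : vv i ∈ M2 :=
      Submodule.le_topologicalClosure _ (Submodule.subset_span ⟨i, rfl⟩)
    have h3 : uu i + vv i - vv i ∈ M2 ⊔ MB :=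
      Submodule.sub_mem _ (Submodule.mem_sup_right h1) (Submodule.mem_sup_left h2)
    rw [add_sub_cancel_right] at h3
    exact Submodule.le_topologicalClosure _ h3
  have singK2 : ∀ s t : S ⟨M2, hM2c⟩, s = t := by
    apply triple ⟨M1, hM1c⟩ ⟨MB, hMBc⟩ ⟨M2, hM2c⟩
      ⟨(M1 ⊔ MB).topologicalClosure, Submodule.isClosed_topologicalClosure _⟩
      rfl ?_ hK1B hK12 (by rw [inf_comm]; exact hK2B)
    show M2 ≤ (M1 ⊔ MB).topologicalClosure
    rw [hM2def]
    refine Submodule.topologicalClosure_minimal _ ?_ (Submodule.isClosed_topologicalClosure _)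
    rw [Submodule.span_le]
    rintro _ ⟨i, rfl⟩
    have h1 : uu i + vv i ∈ MB :=
      Submodule.le_topologicalClosure _ (Submodule.subset_span ⟨i, rfl⟩)
    have h2 : uu i ∈ M1 :=
      Submodule.le_topologicalClosure _ (Submodule.subset_span ⟨i, rfl⟩)
    have h3 : uu i + vv i - uu i ∈ M1 ⊔ MB :=
      Submodule.sub_mem _ (Submodule.mem_sup_right h1) (Submodule.mem_sup_left h2)
    rw [add_sub_cancel_left] at h3
    exact Submodule.le_topologicalClosure _ h3
  obtain ⟨s0⟩ := hne U
  by_cases hcE : (Set.range cf)ᶜ = (∅ : Set ↥w)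
  · -- no remainder: U is covered by the two halves
    have hrange : Set.range cf = Set.univ := by
      rwa [← Set.compl_empty_iff]
    have hrg : su ∪ sv = Set.range g := by
      have e1 : Set.range (g ∘ cf) = su ∪ sv := Sum.range_eq _
      rw [← e1, Set.range_comp, hrange, Set.image_univ]
    have hsupU : U.1 = (M1 ⊔ M2).topologicalClosure := by
      rw [hM1def, hM2def, clsup, ← Submodule.span_union, hrg, D]
    have hU : ∀ s t : S U, s = t :=
      extend ⟨M1, hM1c⟩ ⟨M2, hM2c⟩ U hK12 hsupU singK1 singK2
    exact ⟨s0, fun t => hU t s0⟩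
  · -- remainder: one extra basis vector r
    obtain ⟨r0, hr0⟩ := Set.nonempty_iff_ne_empty.2 hcE
    have hcompl : (Set.range cf)ᶜ = {r0} :=
      Set.eq_singleton_iff_unique_mem.2 ⟨hr0, fun z hz => hcsub hz hr0⟩
    set r : H := g r0 with hrdef
    have hr1 : ⟪r, r⟫ = 1 := hnorm1 r0
    have hrne : r ≠ 0 := by
      intro h
      rw [h] at hr1
      simp at hr1
    have horthr : ∀ z ∈ su ∪ sv, ⟪r, z⟫ = 0 := by
      rintro z (⟨i, rfl⟩ | ⟨i, rfl⟩)
      · exact horth r0 (cf (Sum.inl i)) (fun h => hr0 ⟨Sum.inl i, h.symm⟩)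
      · exact horth r0 (cf (Sum.inr i)) (fun h => hr0 ⟨Sum.inr i, h.symm⟩)
    set MV : Submodule ℂ H := (Submodule.span ℂ (su ∪ sv)).topologicalClosure with hMVdef
    have hMVc : IsClosed (MV : Set H) := Submodule.isClosed_topologicalClosure _
    have singVc : ∀ s t : S ⟨MV, hMVc⟩, s = t := by
      apply extend ⟨M1, hM1c⟩ ⟨M2, hM2c⟩ ⟨MV, hMVc⟩ hK12 _ singK1 singK2
      show MV = (M1 ⊔ M2).topologicalClosure
      rw [hMVdef, hM1def, hM2def, clsup, Submodule.span_union]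
    have hVr : MV ⊓ Submodule.span ℂ {r} = ⊥ := by
      rw [eq_bot_iff]
      rintro z hz
      obtain ⟨hz1, hz2⟩ := Submodule.mem_inf.1 hz
      obtain ⟨c, rfl⟩ := Submodule.mem_span_singleton.1 hz2
      have h := clo_orth (su ∪ sv) r horthr _ hz1
      rw [inner_smul_right, hr1, mul_one] at h
      rw [Submodule.mem_bot, h, zero_smul]
    have hrgU : su ∪ sv ∪ {r} = Set.range g := by
      have e1 : Set.range (g ∘ cf) = su ∪ sv := Sum.range_eq _
      have e2 : ({r} : Set H) = g '' {r0} := by rw [Set.image_singleton]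
      rw [← e1, Set.range_comp, e2, ← Set.image_union, ← hcompl,
        Set.union_compl_self, Set.image_univ]
    have hsupU2 : U.1 = (MV ⊔ Submodule.span ℂ {r}).topologicalClosure := by
      rw [hMVdef, clsup1, ← Submodule.span_union, hrgU, D]
    have singr : ∀ s t : S ⟨Submodule.span ℂ {r}, hclosed _ (Set.finite_singleton r)⟩,
        s = t := singline r hrne _ rfl
    have hU : ∀ s t : S U, s = t :=
      extend ⟨MV, hMVc⟩ ⟨Submodule.span ℂ {r}, hclosed _ (Set.finite_singleton r)⟩ U
        hVr hsupU2 singVc singr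
    exact ⟨s0, fun t => hU t s0⟩
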